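/- Let 0 < ω < 1 be real and let κ̄ ∈ (1,e) be the solution of κ(1 − log κ) = ω in (1,e). For every real x ≥ e, setting m̄ = ⌊κ̄·log x⌋ and ᾱ = κ̄·log(x) − m̄, and for α equal to either ᾱ or 1, one has li_*(x) ≤ li_{ω̄,α}(x). -/

import Mathlib

/-- The Stieltjes asymptotic approximation of `li(x)`:
`li_*(x) = (x/log x)·Σ_{k=0}^{n−1} k!/(log x)^k + (log x − n)·x·n!/(log x)^(n+1)`
with `n = ⌊log x⌋`. -/
noncomputable def liStar (x : ℝ) : ℝ :=
  x / Real.log x *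
      ∑ k ∈ Finset.range ⌊Real.log x⌋₊, (Nat.factorial k : ℝ) / Real.log x ^ k
    + (Real.log x - ⌊Real.log x⌋₊) * x * (Nat.factorial ⌊Real.log x⌋₊ : ℝ)
      / Real.log x ^ (⌊Real.log x⌋₊ + 1)

/-- The truncated asymptotic approximation of `li(x)` with truncation parameter `κ`
and fractional coefficient `α`:
`li_{κ,α}(x) = (x/log x)·(α·m!/(log x)^m + Σ_{k=0}^{m−1} k!/(log x)^k)` with
`m = ⌊κ·log x⌋`. -/
noncomputable def liApprox (κ α x : ℝ) : ℝ :=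
  x / Real.log x *
    (α * (Nat.factorial ⌊κ * Real.log x⌋₊ : ℝ) / Real.log x ^ ⌊κ * Real.log x⌋₊
      + ∑ k ∈ Finset.range ⌊κ * Real.log x⌋₊, (Nat.factorial k : ℝ) / Real.log x ^ k)

/-- For `0 < ω < 1`, `κ̄ ∈ (1,e)` the solution of `κ(1−log κ) = ω`,
every real `x ≥ e`, `m̄ = ⌊κ̄·log x⌋`, `ᾱ = κ̄·log x − m̄`, and `α ∈ {ᾱ, 1}`,
one has `li_*(x) ≤ li_{ω̄,α}(x)`. -/
theorem liStar_le_liApprox_upper (ω κ : ℝ) (hω0 : 0 < ω) (hω1 : ω < 1)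
    (hκ1 : 1 < κ) (hκe : κ < Real.exp 1) (hsol : κ * (1 - Real.log κ) = ω)
    (x : ℝ) (hx : Real.exp 1 ≤ x) (α : ℝ)
    (hα : α = κ * Real.log x - ⌊κ * Real.log x⌋₊ ∨ α = 1) :
    liStar x ≤ liApprox κ α x := by
  have hx0 : (0:ℝ) < x := lt_of_lt_of_le (Real.exp_pos 1) hx
  have hL1 : 1 ≤ Real.log x := by
    have := Real.log_le_log (Real.exp_pos 1) hx
    rwa [Real.log_exp] at this
  set L := Real.log x with hLdef
  have hL0 : 0 < L := lt_of_lt_of_le one_pos hL1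
  have hkL : L ≤ κ * L := by nlinarith
  set n := ⌊L⌋₊ with hn
  set m := ⌊κ * L⌋₊ with hm
  have hnm : n ≤ m := Nat.floor_le_floor hkL
  have hα0 : 0 ≤ α := by
    rcases hα with h | h
    · rw [h]
      have : (m : ℝ) ≤ κ * L := Nat.floor_le (by positivity)
      linarith
    · rw [h]; norm_num
  have hLn1 : L - n ≤ 1 := by
    have : L < n + 1 := Nat.lt_floor_add_one L
    linarith
  have hLn0 : 0 ≤ L - n := by
    have : (n : ℝ) ≤ L := Nat.floor_le hL0.le
    linarith
  have key : (L - n) * (Nat.factorial n : ℝ) / L ^ n ≤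
      α * (Nat.factorial m : ℝ) / L ^ m
        + ∑ k ∈ Finset.Ico n m, (Nat.factorial k : ℝ) / L ^ k := by
    rcases eq_or_lt_of_le hnm with heq | hlt
    · rw [← heq, Finset.Ico_self, Finset.sum_empty, add_zero]
      have hα' : L - n ≤ α := by
        rcases hα with h | h
        · rw [h, ← heq]; linarith
        · linarith [h ▸ hLn1]
      have hc : (0:ℝ) < (Nat.factorial n : ℝ) / L ^ n := by positivity
      calc (L - n) * (Nat.factorial n : ℝ) / L ^ n
          = (L - n) * ((Nat.factorial n : ℝ) / L ^ n) := by ring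
        _ ≤ α * ((Nat.factorial n : ℝ) / L ^ n) :=
            mul_le_mul_of_nonneg_right hα' hc.le
        _ = α * (Nat.factorial n : ℝ) / L ^ n := by ring
    · have h1 : (L - n) * (Nat.factorial n : ℝ) / L ^ n ≤ (Nat.factorial n : ℝ) / L ^ n := by
        have hc : (0:ℝ) ≤ (Nat.factorial n : ℝ) / L ^ n := by positivity
        calc (L - n) * (Nat.factorial n : ℝ) / L ^ n
            = (L - n) * ((Nat.factorial n : ℝ) / L ^ n) := by ring
          _ ≤ 1 * ((Nat.factorial n : ℝ) / L ^ n) := mul_le_mul_of_nonneg_right hLn1 hc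
          _ = (Nat.factorial n : ℝ) / L ^ n := by ring
      have h2 : (Nat.factorial n : ℝ) / L ^ n ≤
          ∑ k ∈ Finset.Ico n m, (Nat.factorial k : ℝ) / L ^ k :=
        Finset.single_le_sum (f := fun k => (Nat.factorial k : ℝ) / L ^ k)
          (fun i _ => by positivity) (Finset.mem_Ico.2 ⟨le_refl n, hlt⟩)
      have h3 : 0 ≤ α * (Nat.factorial m : ℝ) / L ^ m := by positivity
      linarith
  have hsplit : ∑ k ∈ Finset.range m, (Nat.factorial k : ℝ) / L ^ k
      = ∑ k ∈ Finset.range n, (Nat.factorial k : ℝ) / L ^ k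
        + ∑ k ∈ Finset.Ico n m, (Nat.factorial k : ℝ) / L ^ k := by
    rw [Finset.range_eq_Ico, ← Finset.sum_Ico_consecutive _ (Nat.zero_le n) hnm, Finset.range_eq_Ico]
  have hxL : (0:ℝ) ≤ x / L := by positivity
  have heqStar : liStar x = x / L *
      (∑ k ∈ Finset.range n, (Nat.factorial k : ℝ) / L ^ k
        + (L - n) * (Nat.factorial n : ℝ) / L ^ n) := by
    unfold liStar
    rw [← hLdef, ← hn]
    field_simp
    ring
  rw [heqStar]
  unfold liApprox
  rw [← hLdef, ← hm, hsplit]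
  have := mul_le_mul_of_nonneg_left (a := x / L)
    (b := ∑ k ∈ Finset.range n, (Nat.factorial k : ℝ) / L ^ k
        + (L - n) * (Nat.factorial n : ℝ) / L ^ n)
    (c := α * (Nat.factorial m : ℝ) / L ^ m
      + (∑ k ∈ Finset.range n, (Nat.factorial k : ℝ) / L ^ k
        + ∑ k ∈ Finset.Ico n m, (Nat.factorial k : ℝ) / L ^ k))
    (by linarith) hxL
  linarith
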